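/- For all sets A and B and every ℓ ≥ 0, the map sending a pair of event streams ((S,a),(T,b)) ∈ Ev A(ℓ) × Ev B(ℓ) to the event stream on S ∪ T with value a(t) ∈ A at t ∈ S \ T, value b(t) ∈ B at t ∈ T \ S, and value (a(t),b(t)) ∈ A × B at t ∈ S ∩ T, is a bijection Ev A(ℓ) × Ev B(ℓ) ≅ Ev(A ⊙ B)(ℓ), and this bijection commutes with the restriction maps (it is an isomorphism of Int-presheaves); hence Ev is a strong monoidal functor from (Set, ⊙, ∅) to (Int-sheaves, ×, 1). -/

import Mathlib

/-- A length-`ℓ` event stream of type `A`: a finite set `S ⊆ [0,ℓ]` of time-stamps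
together with an event map `S → A`. -/
structure Ev (A : Type) (ℓ : ℝ) where
  S : Finset ℝ
  hS : ∀ s ∈ S, s ∈ Set.Icc (0 : ℝ) ℓ
  val : {s : ℝ // s ∈ S} → A

/-- Restriction of an event stream along the subinterval `[t, t+ℓ'] ⊆ [0,ℓ]`:
keep the time-stamps in `[t, t+ℓ']`, translated by `-t`, with inherited values. -/
noncomputable def Ev.restrict {A : Type} {ℓ : ℝ} (e : Ev A ℓ) (t ℓ' : ℝ)
    (ht : 0 ≤ t) (hl : 0 ≤ ℓ') (h : t + ℓ' ≤ ℓ) : Ev A ℓ' where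
  S := (e.S.filter (fun s => t ≤ s ∧ s ≤ t + ℓ')).image (fun s => s - t)
  hS := by
    intro s hs
    simp only [Finset.mem_image, Finset.mem_filter] at hs
    obtain ⟨u, ⟨_, hu1, hu2⟩, rfl⟩ := hs
    exact Set.mem_Icc.mpr ⟨by linarith, by linarith⟩
  val := fun u => e.val ⟨u.1 + t, by
    obtain ⟨s, hs, hst⟩ := Finset.mem_image.mp u.2
    have hsu : u.1 + t = s := by linarith
    rw [hsu]
    exact (Finset.mem_filter.mp hs).1⟩


/-- The monoidal product `A ⊙ B := A + B + A × B` on sets. -/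
abbrev odot (A B : Type) : Type := A ⊕ B ⊕ A × B

/-- Combine a pair of event streams of types `A` and `B` into a single event stream of
type `A ⊙ B` on the union of the time-stamp sets: value `a t` on `S \ T`, value `b t`
on `T \ S`, and value `(a t, b t)` on `S ∩ T`. -/
noncomputable def Ev.combine {A B : Type} {ℓ : ℝ} (e : Ev A ℓ) (f : Ev B ℓ) :
    Ev (odot A B) ℓ where
  S := e.S ∪ f.S
  hS := by
    intro s hs
    rcases Finset.mem_union.mp hs with h | h
    · exact e.hS s h
    · exact f.hS s h
  val := fun u =>
    if h1 : u.1 ∈ e.S then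
      if h2 : u.1 ∈ f.S then .inr (.inr (e.val ⟨u.1, h1⟩, f.val ⟨u.1, h2⟩))
      else .inl (e.val ⟨u.1, h1⟩)
    else .inr (.inl (f.val ⟨u.1, (Finset.mem_union.mp u.2).resolve_left h1⟩))


theorem Ev.ext' {A : Type} {ℓ : ℝ} {e f : Ev A ℓ} (hS : e.S = f.S)
    (hval : ∀ (s : ℝ) (he : s ∈ e.S) (hf : s ∈ f.S), e.val ⟨s, he⟩ = f.val ⟨s, hf⟩) :
    e = f := by
  obtain ⟨S, hSp, v⟩ := e
  obtain ⟨S', hSp', v'⟩ := f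
  subst hS
  simp only [Ev.mk.injEq, heq_eq_eq, true_and]
  funext u
  exact hval u.1 u.2 u.2

def getA {A B : Type} : odot A B → Option A
  | .inl a => some a
  | .inr (.inl _) => none
  | .inr (.inr p) => some p.1

def getB {A B : Type} : odot A B → Option B
  | .inl _ => none
  | .inr (.inl b) => some b
  | .inr (.inr p) => some p.2

lemma mem_filter_attach {β : Type} (S : Finset ℝ) (v : {x : ℝ // x ∈ S} → β)
    (p : β → Bool) (s : ℝ) :
    s ∈ (S.attach.filter (fun u => p (v u))).image Subtype.val ↔
      ∃ h : s ∈ S, p (v ⟨s, h⟩) := by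
  simp only [Finset.mem_image, Finset.mem_filter, Finset.mem_attach, true_and]
  constructor
  · rintro ⟨a, hp, rfl⟩
    exact ⟨a.2, hp⟩
  · rintro ⟨h, hp⟩
    exact ⟨⟨s, h⟩, hp, rfl⟩

noncomputable def Ev.splitA {A B : Type} {ℓ : ℝ} (g : Ev (odot A B) ℓ) : Ev A ℓ where
  S := (g.S.attach.filter (fun u => (getA (g.val u)).isSome)).image Subtype.val
  hS := by
    intro s hs
    obtain ⟨hm, _⟩ := (mem_filter_attach _ _ _ _).mp hs
    exact g.hS s hm
  val := fun u =>
    (getA (g.val ⟨u.1, ((mem_filter_attach _ _ _ _).mp u.2).1⟩)).get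
      ((mem_filter_attach _ _ _ _).mp u.2).2

noncomputable def Ev.splitB {A B : Type} {ℓ : ℝ} (g : Ev (odot A B) ℓ) : Ev B ℓ where
  S := (g.S.attach.filter (fun u => (getB (g.val u)).isSome)).image Subtype.val
  hS := by
    intro s hs
    obtain ⟨hm, _⟩ := (mem_filter_attach _ _ _ _).mp hs
    exact g.hS s hm
  val := fun u =>
    (getB (g.val ⟨u.1, ((mem_filter_attach _ _ _ _).mp u.2).1⟩)).get
      ((mem_filter_attach _ _ _ _).mp u.2).2

lemma mem_splitA {A B : Type} {ℓ : ℝ} (g : Ev (odot A B) ℓ) (s : ℝ) :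
    s ∈ g.splitA.S ↔ ∃ h : s ∈ g.S, (getA (g.val ⟨s, h⟩)).isSome :=
  mem_filter_attach _ _ _ _

lemma mem_splitB {A B : Type} {ℓ : ℝ} (g : Ev (odot A B) ℓ) (s : ℝ) :
    s ∈ g.splitB.S ↔ ∃ h : s ∈ g.S, (getB (g.val ⟨s, h⟩)).isSome :=
  mem_filter_attach _ _ _ _

lemma splitA_val {A B : Type} {ℓ : ℝ} (g : Ev (odot A B) ℓ) (s : ℝ)
    (hs : s ∈ g.splitA.S) (hm : s ∈ g.S) (a : A) (ha : getA (g.val ⟨s, hm⟩) = some a) :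
    g.splitA.val ⟨s, hs⟩ = a := by
  simp only [Ev.splitA]
  exact Option.get_of_mem _ (Option.mem_def.mpr ha)

lemma splitB_val {A B : Type} {ℓ : ℝ} (g : Ev (odot A B) ℓ) (s : ℝ)
    (hs : s ∈ g.splitB.S) (hm : s ∈ g.S) (b : B) (hb : getB (g.val ⟨s, hm⟩) = some b) :
    g.splitB.val ⟨s, hs⟩ = b := by
  simp only [Ev.splitB]
  exact Option.get_of_mem _ (Option.mem_def.mpr hb)

lemma combine_val {A B : Type} {ℓ : ℝ} (e : Ev A ℓ) (f : Ev B ℓ) (s : ℝ)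
    (hs : s ∈ (e.combine f).S) :
    (e.combine f).val ⟨s, hs⟩ =
      if h1 : s ∈ e.S then
        if h2 : s ∈ f.S then .inr (.inr (e.val ⟨s, h1⟩, f.val ⟨s, h2⟩))
        else .inl (e.val ⟨s, h1⟩)
      else .inr (.inl (f.val ⟨s, (Finset.mem_union.mp hs).resolve_left h1⟩)) := rfl

lemma splitA_combine {A B : Type} {ℓ : ℝ} (e : Ev A ℓ) (f : Ev B ℓ) :
    (e.combine f).splitA = e := by
  apply Ev.ext'
  case hS =>
    ext s
    rw [mem_splitA]
    constructor
    · rintro ⟨h, hp⟩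
      by_contra hne
      rw [combine_val, dif_neg hne] at hp
      simp [getA] at hp
    · intro he
      refine ⟨Finset.mem_union_left _ he, ?_⟩
      erw [combine_val, dif_pos he]
      by_cases hf : s ∈ f.S
      · rw [dif_pos hf]; simp [getA]
      · rw [dif_neg hf]; simp [getA]
  · intro s hA he
    have hm : s ∈ (e.combine f).S := Finset.mem_union_left _ he
    by_cases hf : s ∈ f.S
    · exact splitA_val _ s hA hm _ (by rw [combine_val, dif_pos he, dif_pos hf]; rfl)
    · exact splitA_val _ s hA hm _ (by rw [combine_val, dif_pos he, dif_neg hf]; rfl)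

lemma splitB_combine {A B : Type} {ℓ : ℝ} (e : Ev A ℓ) (f : Ev B ℓ) :
    (e.combine f).splitB = f := by
  apply Ev.ext'
  case hS =>
    ext s
    rw [mem_splitB]
    constructor
    · rintro ⟨h, hp⟩
      by_contra hne
      rw [combine_val] at hp
      by_cases he : s ∈ e.S
      · rw [dif_pos he, dif_neg hne] at hp; simp [getB] at hp
      · exact absurd ((Finset.mem_union.mp h).resolve_left he) hne
    · intro hf
      refine ⟨Finset.mem_union_right _ hf, ?_⟩
      erw [combine_val]
      by_cases he : s ∈ e.S
      · rw [dif_pos he, dif_pos hf]; simp [getB]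
      · rw [dif_neg he]; simp [getB]
  · intro s hB hf
    have hm : s ∈ (e.combine f).S := Finset.mem_union_right _ hf
    by_cases he : s ∈ e.S
    · exact splitB_val _ s hB hm _ (by rw [combine_val, dif_pos he, dif_pos hf]; rfl)
    · exact splitB_val _ s hB hm _ (by rw [combine_val, dif_neg he]; rfl)

lemma combine_split {A B : Type} {ℓ : ℝ} (g : Ev (odot A B) ℓ) :
    g.splitA.combine g.splitB = g := by
  have hSA : ∀ s (h : s ∈ g.S), s ∈ g.splitA.S ↔ (getA (g.val ⟨s, h⟩)).isSome := by
    intro s h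
    rw [mem_splitA]
    exact ⟨fun ⟨h', hp⟩ => hp, fun hp => ⟨h, hp⟩⟩
  have hSB : ∀ s (h : s ∈ g.S), s ∈ g.splitB.S ↔ (getB (g.val ⟨s, h⟩)).isSome := by
    intro s h
    rw [mem_splitB]
    exact ⟨fun ⟨h', hp⟩ => hp, fun hp => ⟨h, hp⟩⟩
  have hS : (g.splitA.combine g.splitB).S = g.S := by
    ext s
    simp only [Ev.combine, Finset.mem_union]
    constructor
    · rintro (h | h)
      · exact ((mem_splitA g s).mp h).1
      · exact ((mem_splitB g s).mp h).1
    · intro h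
      rcases hv : g.val ⟨s, h⟩ with a | b | p
      · exact Or.inl ((hSA s h).mpr (by rw [hv]; rfl))
      · exact Or.inr ((hSB s h).mpr (by rw [hv]; rfl))
      · exact Or.inl ((hSA s h).mpr (by rw [hv]; rfl))
  apply Ev.ext' hS
  intro s hc hg
  rw [combine_val]
  rcases hv : g.val ⟨s, hg⟩ with a | b | p
  · have hA : s ∈ g.splitA.S := (hSA s hg).mpr (by rw [hv]; rfl)
    have hB : s ∉ g.splitB.S := by rw [hSB s hg, hv]; simp [getB]
    rw [dif_pos hA, dif_neg hB, splitA_val g s hA hg a (by rw [hv]; rfl)]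
  · have hA : s ∉ g.splitA.S := by rw [hSA s hg, hv]; simp [getA]
    have hB : s ∈ g.splitB.S := (hSB s hg).mpr (by rw [hv]; rfl)
    rw [dif_neg hA, splitB_val g s hB hg b (by rw [hv]; rfl)]
  · have hA : s ∈ g.splitA.S := (hSA s hg).mpr (by rw [hv]; rfl)
    have hB : s ∈ g.splitB.S := (hSB s hg).mpr (by rw [hv]; rfl)
    rw [dif_pos hA, dif_pos hB, splitA_val g s hA hg p.1 (by rw [hv]; rfl),
      splitB_val g s hB hg p.2 (by rw [hv]; rfl)]

lemma mem_restrict {A : Type} {ℓ : ℝ} (e : Ev A ℓ) (t ℓ' : ℝ)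
    (ht : 0 ≤ t) (hl : 0 ≤ ℓ') (h : t + ℓ' ≤ ℓ) (u : ℝ) :
    u ∈ (e.restrict t ℓ' ht hl h).S ↔ u + t ∈ e.S ∧ 0 ≤ u ∧ u ≤ ℓ' := by
  simp only [Ev.restrict, Finset.mem_image, Finset.mem_filter]
  constructor
  · rintro ⟨s, ⟨hs, h1, h2⟩, rfl⟩
    constructor
    · have : s - t + t = s := by ring
      rw [this]; exact hs
    · constructor <;> linarith
  · rintro ⟨hm, h1, h2⟩
    exact ⟨u + t, ⟨hm, by linarith, by linarith⟩, by ring⟩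

lemma restrict_val {A : Type} {ℓ : ℝ} (e : Ev A ℓ) (t ℓ' : ℝ)
    (ht : 0 ≤ t) (hl : 0 ≤ ℓ') (h : t + ℓ' ≤ ℓ) (u : ℝ)
    (hu : u ∈ (e.restrict t ℓ' ht hl h).S) (hm : u + t ∈ e.S) :
    (e.restrict t ℓ' ht hl h).val ⟨u, hu⟩ = e.val ⟨u + t, hm⟩ := rfl

/-- For all sets `A`, `B` and every `ℓ ≥ 0`, combining event streams is a bijection
`Ev A (ℓ) × Ev B (ℓ) ≅ Ev (A ⊙ B) (ℓ)`, and this bijection commutes with the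
restriction maps; hence `Ev` is a strong monoidal functor
`(Set, ⊙, ∅) → (Int-sheaves, ×, 1)`. -/
theorem ev_strong_monoidal (A B : Type) (ℓ : ℝ) (hℓ : 0 ≤ ℓ) :
    Function.Bijective (fun p : Ev A ℓ × Ev B ℓ => p.1.combine p.2) ∧
    (∀ (e : Ev A ℓ) (f : Ev B ℓ) (t ℓ' : ℝ) (ht : 0 ≤ t) (hl : 0 ≤ ℓ')
      (h : t + ℓ' ≤ ℓ),
      (e.restrict t ℓ' ht hl h).combine (f.restrict t ℓ' ht hl h)
        = (e.combine f).restrict t ℓ' ht hl h) := by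
  constructor
  · apply Function.bijective_iff_has_inverse.mpr
    refine ⟨fun g => (g.splitA, g.splitB), ?_, ?_⟩
    · rintro ⟨e, f⟩
      simp only [splitA_combine, splitB_combine]
    · intro g
      exact combine_split g
  · intro e f t ℓ' ht hl h
    have hS : ((e.restrict t ℓ' ht hl h).combine (f.restrict t ℓ' ht hl h)).S
        = ((e.combine f).restrict t ℓ' ht hl h).S := by
      show (e.restrict t ℓ' ht hl h).S ∪ (f.restrict t ℓ' ht hl h).S
          = ((e.S ∪ f.S).filter (fun s => t ≤ s ∧ s ≤ t + ℓ')).image (fun s => s - t)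
      rw [Finset.filter_union, Finset.image_union]
      rfl
    apply Ev.ext' hS
    intro u hc hr
    have hbounds : 0 ≤ u ∧ u ≤ ℓ' := by
      have := mem_restrict (e.combine f) t ℓ' ht hl h u |>.mp hr
      exact this.2
    have hmem : u + t ∈ e.S ∪ f.S := (mem_restrict (e.combine f) t ℓ' ht hl h u |>.mp hr).1
    rw [restrict_val (e.combine f) t ℓ' ht hl h u hr hmem, combine_val]
    erw [combine_val]
    have hie : u ∈ (e.restrict t ℓ' ht hl h).S ↔ u + t ∈ e.S := by
      rw [mem_restrict]
      exact ⟨fun x => x.1, fun x => ⟨x, hbounds⟩⟩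
    have hif : u ∈ (f.restrict t ℓ' ht hl h).S ↔ u + t ∈ f.S := by
      rw [mem_restrict]
      exact ⟨fun x => x.1, fun x => ⟨x, hbounds⟩⟩
    by_cases he : u + t ∈ e.S
    · rw [dif_pos (hie.mpr he), dif_pos he]
      by_cases hf : u + t ∈ f.S
      · rw [dif_pos (hif.mpr hf), dif_pos hf]
        rw [restrict_val e t ℓ' ht hl h u (hie.mpr he) he,
          restrict_val f t ℓ' ht hl h u (hif.mpr hf) hf]
      · rw [dif_neg (fun c => hf (hif.mp c)), dif_neg hf]
        rw [restrict_val e t ℓ' ht hl h u (hie.mpr he) he]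
    · rw [dif_neg (fun c => he (hie.mp c)), dif_neg he]
      have hf : u + t ∈ f.S := (Finset.mem_union.mp hmem).resolve_left he
      rw [restrict_val f t ℓ' ht hl h u (hif.mpr hf) hf]
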